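/- For every real number z > 0, one has 2z(z − sin z)/(z² + 2·cos z − 2) < 4, and the expression tends to 4 as z → 0⁺. -/

import Mathlib

open Filter Set

private lemma hdD (x : ℝ) : HasDerivAt (fun x : ℝ => x ^ 2 + 2 * Real.cos x - 2)
    (2 * x - 2 * Real.sin x) x := by
  have h1 := hasDerivAt_pow 2 x
  have h2 := (Real.hasDerivAt_cos x).const_mul (2 : ℝ)
  refine ((h1.add h2).sub_const 2).congr_deriv ?_
  ring

private lemma denom_pos {z : ℝ} (hz : 0 < z) : 0 < z ^ 2 + 2 * Real.cos z - 2 := by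
  have hmono : StrictMonoOn (fun x : ℝ => x ^ 2 + 2 * Real.cos x - 2) (Ici 0) := by
    apply strictMonoOn_of_deriv_pos (convex_Ici 0)
    · exact (Continuous.continuousOn (by continuity))
    · intro x hx
      rw [interior_Ici] at hx
      rw [(hdD x).deriv]
      have := Real.sin_lt hx
      linarith
  have h0 : (fun x : ℝ => x ^ 2 + 2 * Real.cos x - 2) 0 = 0 := by simp
  have := hmono (self_mem_Ici) (mem_Ici.mpr hz.le) hz
  simpa [h0] using this

private lemma hdg (x : ℝ) : HasDerivAt (fun x : ℝ => x ^ 2 + x * Real.sin x + 4 * Real.cos x - 4)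
    (2 * x + x * Real.cos x - 3 * Real.sin x) x := by
  have h1 := hasDerivAt_pow 2 x
  have h2 := (hasDerivAt_id x).mul (Real.hasDerivAt_sin x)
  have h3 := (Real.hasDerivAt_cos x).const_mul (4 : ℝ)
  refine (((h1.add h2).add h3).sub_const 4).congr_deriv ?_
  simp only [id_eq]
  ring

private lemma hdg1 (x : ℝ) : HasDerivAt (fun x : ℝ => 2 * x + x * Real.cos x - 3 * Real.sin x)
    (2 - 2 * Real.cos x - x * Real.sin x) x := by
  have h1 := (hasDerivAt_id x).const_mul (2 : ℝ)
  have h2 := (hasDerivAt_id x).mul (Real.hasDerivAt_cos x)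
  have h3 := (Real.hasDerivAt_sin x).const_mul (3 : ℝ)
  refine ((h1.add h2).sub h3).congr_deriv ?_
  simp only [id_eq]
  ring

private lemma g2_pos {x : ℝ} (hx0 : 0 < x) (hx6 : x < 6) :
    0 < 2 - 2 * Real.cos x - x * Real.sin x := by
  have hcos : Real.cos x = 1 - 2 * Real.sin (x / 2) ^ 2 := by
    have h1 : Real.cos (2 * (x / 2)) = 2 * Real.cos (x / 2) ^ 2 - 1 := Real.cos_two_mul _
    have h2 := Real.sin_sq_add_cos_sq (x / 2)
    have h3 : 2 * (x / 2) = x := by ring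
    rw [h3] at h1
    linarith
  have hsin : Real.sin x = 2 * Real.sin (x / 2) * Real.cos (x / 2) := by
    have := Real.sin_two_mul (x / 2)
    rw [show 2 * (x / 2) = x by ring] at this
    linarith
  have hs : 0 < Real.sin (x / 2) := by
    apply Real.sin_pos_of_pos_of_lt_pi (by linarith)
    have := Real.pi_gt_three
    linarith
  have hkey : x * Real.cos (x / 2) < 2 * Real.sin (x / 2) := by
    rcases le_or_gt (Real.cos (x / 2)) 0 with h | h
    · nlinarith
    · have hlt : x / 2 < Real.pi / 2 := by
        by_contra hc
        push_neg at hc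
        have : Real.cos (x / 2) ≤ 0 := by
          apply Real.cos_nonpos_of_pi_div_two_le_of_le hc
          have := Real.pi_gt_three
          linarith
        linarith
      have := Real.lt_tan (by linarith : 0 < x / 2) hlt
      rw [Real.tan_eq_sin_div_cos] at this
      rw [lt_div_iff₀ h] at this
      nlinarith
  rw [hcos, hsin]
  nlinarith

private lemma g_pos {z : ℝ} (hz : 0 < z) :
    0 < z ^ 2 + z * Real.sin z + 4 * Real.cos z - 4 := by
  rcases le_or_gt z 6 with h6 | h6
  · -- chain of strict monotonicity on [0, 6]
    have hg1 : ∀ x ∈ Ioo (0 : ℝ) 6, 0 < 2 * x + x * Real.cos x - 3 * Real.sin x := by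
      have hmono : StrictMonoOn (fun x : ℝ => 2 * x + x * Real.cos x - 3 * Real.sin x)
          (Icc 0 6) := by
        apply strictMonoOn_of_deriv_pos (convex_Icc 0 6)
        · exact Continuous.continuousOn (by continuity)
        · intro x hx
          rw [interior_Icc] at hx
          rw [(hdg1 x).deriv]
          exact g2_pos hx.1 hx.2
      intro x hx
      have := hmono (left_mem_Icc.mpr (by norm_num)) ⟨hx.1.le, hx.2.le⟩ hx.1
      simpa using this
    have hmono : StrictMonoOn (fun x : ℝ => x ^ 2 + x * Real.sin x + 4 * Real.cos x - 4)
        (Icc 0 6) := by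
      apply strictMonoOn_of_deriv_pos (convex_Icc 0 6)
      · exact Continuous.continuousOn (by continuity)
      · intro x hx
        rw [interior_Icc] at hx
        rw [(hdg x).deriv]
        exact hg1 x hx
    have := hmono (left_mem_Icc.mpr (by norm_num)) ⟨hz.le, h6⟩ hz
    simpa using this
  · have h1 := Real.neg_one_le_sin z
    have h2 := Real.neg_one_le_cos z
    nlinarith

private lemma dD_plus (x : ℝ) :
    HasDerivAt (fun x : ℝ => x ^ 4 / 12 + x ^ 5 / 48 - (x ^ 2 + 2 * Real.cos x - 2))
      (x ^ 3 / 3 + 5 * x ^ 4 / 48 - (2 * x - 2 * Real.sin x)) x := by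
  have h1 := (hasDerivAt_pow 4 x).div_const 12
  have h2 := (hasDerivAt_pow 5 x).div_const 48
  refine ((h1.add h2).sub (hdD x)).congr_deriv ?_
  push_cast
  ring

private lemma dD_minus (x : ℝ) :
    HasDerivAt (fun x : ℝ => x ^ 2 + 2 * Real.cos x - 2 - x ^ 4 / 12 + x ^ 5 / 48)
      (2 * x - 2 * Real.sin x - x ^ 3 / 3 + 5 * x ^ 4 / 48) x := by
  have h1 := (hasDerivAt_pow 4 x).div_const 12
  have h2 := (hasDerivAt_pow 5 x).div_const 48
  refine (((hdD x).sub h1).add h2).congr_deriv ?_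
  push_cast
  ring

private lemma sin_approx {x : ℝ} (h0 : 0 ≤ x) (h1 : x ≤ 1) :
    x ^ 3 / 6 - 5 * x ^ 4 / 96 ≤ x - Real.sin x ∧ x - Real.sin x ≤ x ^ 3 / 6 + 5 * x ^ 4 / 96 := by
  have hb := Real.sin_bound (x := x) (by rw [abs_of_nonneg h0]; exact h1)
  rw [abs_of_nonneg h0] at hb
  rw [abs_le] at hb
  constructor <;> nlinarith [hb.1, hb.2, mul_le_mul_of_nonneg_left h1 (pow_nonneg h0 4)]

private lemma D_bounds {z : ℝ} (h0 : 0 < z) (h1 : z < 1) :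
    z ^ 4 / 12 - z ^ 5 / 48 ≤ z ^ 2 + 2 * Real.cos z - 2 ∧
      z ^ 2 + 2 * Real.cos z - 2 ≤ z ^ 4 / 12 + z ^ 5 / 48 := by
  constructor
  · have hmono : MonotoneOn (fun x : ℝ => x ^ 2 + 2 * Real.cos x - 2 - x ^ 4 / 12 + x ^ 5 / 48)
        (Icc 0 1) := by
      apply monotoneOn_of_deriv_nonneg (convex_Icc 0 1)
      · exact Continuous.continuousOn (by continuity)
      · intro x hx
        exact (dD_minus x).differentiableAt.differentiableWithinAt
      · intro x hx
        rw [interior_Icc] at hx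
        rw [(dD_minus x).deriv]
        have := (sin_approx hx.1.le hx.2.le).1
        nlinarith
    have := hmono (left_mem_Icc.mpr (by norm_num)) ⟨h0.le, h1.le⟩ h0.le
    simp only at this
    norm_num at this
    linarith
  · have hmono : MonotoneOn
        (fun x : ℝ => x ^ 4 / 12 + x ^ 5 / 48 - (x ^ 2 + 2 * Real.cos x - 2)) (Icc 0 1) := by
      apply monotoneOn_of_deriv_nonneg (convex_Icc 0 1)
      · exact Continuous.continuousOn (by continuity)
      · intro x hx
        exact (dD_plus x).differentiableAt.differentiableWithinAt
      · intro x hx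
        rw [interior_Icc] at hx
        rw [(dD_plus x).deriv]
        have := (sin_approx hx.1.le hx.2.le).2
        nlinarith
    have := hmono (left_mem_Icc.mpr (by norm_num)) ⟨h0.le, h1.le⟩ h0.le
    simp only at this
    norm_num at this
    linarith

theorem stmt3 :
    (∀ z : ℝ, 0 < z →
      2 * z * (z - Real.sin z) / (z ^ 2 + 2 * Real.cos z - 2) < 4) ∧
    Tendsto (fun z : ℝ => 2 * z * (z - Real.sin z) / (z ^ 2 + 2 * Real.cos z - 2))
      (nhdsWithin 0 (Ioi 0)) (nhds 4) := by
  constructor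
  · intro z hz
    have hD := denom_pos hz
    rw [div_lt_iff₀ hD]
    have := g_pos hz
    nlinarith
  · -- squeeze between explicit rational functions
    set L : ℝ → ℝ := fun z => (1 / 3 - 5 * z / 48) / (1 / 12 + z / 48) with hL
    set U : ℝ → ℝ := fun z => (1 / 3 + 5 * z / 48) / (1 / 12 - z / 48) with hU
    have hLtend : Tendsto L (nhdsWithin 0 (Ioi 0)) (nhds 4) := by
      have hc : ContinuousAt L 0 := by
        apply ContinuousAt.div (by fun_prop) (by fun_prop)
        norm_num
      have : L 0 = 4 := by simp [hL]; norm_num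
      rw [← this]
      exact hc.continuousWithinAt.tendsto
    have hUtend : Tendsto U (nhdsWithin 0 (Ioi 0)) (nhds 4) := by
      have hc : ContinuousAt U 0 := by
        apply ContinuousAt.div (by fun_prop) (by fun_prop)
        norm_num
      have : U 0 = 4 := by simp [hU]; norm_num
      rw [← this]
      exact hc.continuousWithinAt.tendsto
    have hmem : Ioo (0 : ℝ) 1 ∈ nhdsWithin (0 : ℝ) (Ioi 0) :=
      Ioo_mem_nhdsGT_of_mem (by norm_num : (0 : ℝ) ∈ Ico (0 : ℝ) 1)
    apply tendsto_of_tendsto_of_tendsto_of_le_of_le' hLtend hUtend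
    · filter_upwards [hmem] with z hz
      obtain ⟨hz0, hz1⟩ := hz
      have hD := denom_pos hz0
      have hDb := D_bounds hz0 hz1
      have hs := sin_approx hz0.le hz1.le
      have hNlow : z ^ 4 / 3 - 5 * z ^ 5 / 48 ≤ 2 * z * (z - Real.sin z) := by nlinarith [hs.1]
      have hNpos : 0 ≤ 2 * z * (z - Real.sin z) := by
        have := Real.sin_lt hz0
        nlinarith
      have step : (z ^ 4 / 3 - 5 * z ^ 5 / 48) / (z ^ 4 / 12 + z ^ 5 / 48) ≤
          2 * z * (z - Real.sin z) / (z ^ 2 + 2 * Real.cos z - 2) :=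
        div_le_div₀ hNpos hNlow hD hDb.2
      refine le_trans (le_of_eq ?_) step
      have hz4 : (0 : ℝ) < z ^ 4 := by positivity
      rw [hL]
      beta_reduce
      rw [div_eq_div_iff (by positivity : (0:ℝ) < 1 / 12 + z / 48).ne' (by positivity : (0:ℝ) < z ^ 4 / 12 + z ^ 5 / 48).ne']
      ring
    · filter_upwards [hmem] with z hz
      obtain ⟨hz0, hz1⟩ := hz
      have hD := denom_pos hz0
      have hDb := D_bounds hz0 hz1
      have hs := sin_approx hz0.le hz1.le
      have hNhigh : 2 * z * (z - Real.sin z) ≤ z ^ 4 / 3 + 5 * z ^ 5 / 48 := by nlinarith [hs.2]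
      have hDlowpos : (0 : ℝ) < z ^ 4 / 12 - z ^ 5 / 48 := by nlinarith
      have hNhpos : (0 : ℝ) ≤ z ^ 4 / 3 + 5 * z ^ 5 / 48 := by positivity
      have step : 2 * z * (z - Real.sin z) / (z ^ 2 + 2 * Real.cos z - 2) ≤
          (z ^ 4 / 3 + 5 * z ^ 5 / 48) / (z ^ 4 / 12 - z ^ 5 / 48) :=
        div_le_div₀ hNhpos hNhigh hDlowpos hDb.1
      refine le_trans step (le_of_eq ?_)
      rw [hU]
      beta_reduce
      rw [div_eq_div_iff hDlowpos.ne' (by nlinarith : (0:ℝ) < 1 / 12 - z / 48).ne']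
      ring
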